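/- Let q be a prime power, let k, m be positive integers, and let C ⊆ Mat(k×m, F_q) be a non-zero MRD code with minimum rank d and rank distribution (A_i)_{i≥0}. Then A_{d+ℓ} > 0 for every integer 0 ≤ ℓ ≤ min{k,m} − d. -/

import Mathlib

open Matrix BigOperators

/-- The Gaussian (q-)binomial coefficient, defined via the q-Pascal recursion. -/
def qBinom (q : ℕ) : ℕ → ℕ → ℕ
  | _, 0 => 1
  | 0, _ + 1 => 0
  | s + 1, t + 1 => qBinom q s t + q ^ (t + 1) * qBinom q s (t + 1)

variable {F : Type} [Field F]

/-- The dual of a rank-metric code with respect to the trace product. -/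
def dualCode {k m : ℕ} (C : Submodule F (Matrix (Fin k) (Fin m) F)) :
    Submodule F (Matrix (Fin k) (Fin m) F) where
  carrier := {N | ∀ M ∈ C, Matrix.trace (M * Nᵀ) = 0}
  add_mem' := by
    intro a b ha hb M hM
    rw [Set.mem_setOf_eq] at *
    rw [Matrix.transpose_add, Matrix.mul_add, Matrix.trace_add, ha M hM, hb M hM, add_zero]
  zero_mem' := by
    intro M hM
    simp
  smul_mem' := by
    intro c N hN M hM
    rw [Set.mem_setOf_eq] at *
    rw [Matrix.transpose_smul, Matrix.mul_smul, Matrix.trace_smul, hN M hM, smul_zero]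

/-- Minimum rank of a code. -/
noncomputable def minrk {k m : ℕ} (C : Submodule F (Matrix (Fin k) (Fin m) F)) : ℕ :=
  sInf {r | ∃ M ∈ C, M ≠ 0 ∧ M.rank = r}

/-- Maximum rank of a code. -/
noncomputable def maxrk {k m : ℕ} (C : Submodule F (Matrix (Fin k) (Fin m) F)) : ℕ :=
  sSup {r | ∃ M ∈ C, M.rank = r}

/-- Rank distribution of a code. -/
noncomputable def rankDist {k m : ℕ} (C : Submodule F (Matrix (Fin k) (Fin m) F)) (i : ℕ) : ℕ :=
  Nat.card {M : Matrix (Fin k) (Fin m) F // M ∈ C ∧ M.rank = i}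

/-- MRD codes. -/
def IsMRD {k m : ℕ} (C : Submodule F (Matrix (Fin k) (Fin m) F)) : Prop :=
  C = ⊥ ∨ Module.finrank F ↥C = max k m * (min k m - minrk C + 1)

/-- Optimal anticodes. -/
def IsOptimalAnticode {k m : ℕ} (C : Submodule F (Matrix (Fin k) (Fin m) F)) : Prop :=
  Module.finrank F ↥C = max k m * maxrk C

/-- The subspace of matrices whose column space is contained in `U`. -/
def matIn {k : ℕ} (m : ℕ) (U : Submodule F (Fin k → F)) :
    Submodule F (Matrix (Fin k) (Fin m) F) where
  carrier := {M | ∀ j, Mᵀ j ∈ U}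
  add_mem' := by
    intro a b ha hb j
    rw [Matrix.transpose_add]
    exact U.add_mem (ha j) (hb j)
  zero_mem' := by
    intro j
    rw [Matrix.transpose_zero]
    exact U.zero_mem
  smul_mem' := by
    intro c M hM j
    rw [Matrix.transpose_smul]
    exact U.smul_mem c (hM j)

/-- The dual of a subspace of `Fin k → K` with respect to the standard inner product. -/
def dualPi {K : Type} [Field K] {k : ℕ} (C : Submodule K (Fin k → K)) :
    Submodule K (Fin k → K) where
  carrier := {β | ∀ α ∈ C, ∑ i, α i * β i = 0}
  add_mem' := by
    intro a b ha hb α hα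
    rw [Set.mem_setOf_eq] at *
    have : ∑ i, α i * (a + b) i = (∑ i, α i * a i) + ∑ i, α i * b i := by
      rw [← Finset.sum_add_distrib]
      exact Finset.sum_congr rfl fun i _ => by simp [mul_add]
    rw [this, ha α hα, hb α hα, add_zero]
  zero_mem' := by
    intro α hα
    simp
  smul_mem' := by
    intro c β hβ α hα
    rw [Set.mem_setOf_eq] at *
    have : ∑ i, α i * (c • β) i = c * ∑ i, α i * β i := by
      rw [Finset.mul_sum]
      exact Finset.sum_congr rfl fun i _ => by simp [smul_eq_mul]; ring
    rw [this, hβ α hα, mul_zero]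

/-- The matrix associated to a vector `α ∈ K^k` with respect to a basis `G` of `K` over `F`. -/
noncomputable def matOfBasis (F K : Type) [Field F] [Field K] [Algebra F K]
    (k m : ℕ) (G : Module.Basis (Fin m) F K) :
    (Fin k → K) →ₗ[F] Matrix (Fin k) (Fin m) F where
  toFun α := Matrix.of fun i j => G.repr (α i) j
  map_add' α β := by
    ext i j
    simp
  map_smul' c α := by
    ext i j
    simp

/-- The `h`-trace of a `k × m` matrix (`k ≤ m`). -/
def hTrace {k m : ℕ} (hkm : k ≤ m) (h : ℕ) (M : Matrix (Fin k) (Fin m) F) : F :=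
  ∑ i : Fin k, if (i : ℕ) < h then M i (Fin.castLE hkm i) else 0
section Aux

open Module Submodule

lemma rank_le_of_cols_mem {k m : ℕ} (U : Submodule F (Fin k → F))
    (M : Matrix (Fin k) (Fin m) F) (h : ∀ j, Mᵀ j ∈ U) :
    M.rank ≤ Module.finrank F U := by
  rw [Matrix.rank_eq_finrank_span_cols]
  exact Submodule.finrank_mono (Submodule.span_le.2 (by rintro _ ⟨j, rfl⟩; exact h j))

noncomputable def matInEquiv {k : ℕ} (m : ℕ) (U : Submodule F (Fin k → F)) :
    (matIn m U) ≃ₗ[F] (Fin m → U) where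
  toFun M := fun j => ⟨(M : Matrix (Fin k) (Fin m) F)ᵀ j, M.2 j⟩
  map_add' M N := rfl
  map_smul' c M := rfl
  invFun f := ⟨Matrix.of fun i j => (f j : Fin k → F) i, fun j => (f j).2⟩
  left_inv M := rfl
  right_inv f := rfl

lemma finrank_matIn {k : ℕ} (m : ℕ) (U : Submodule F (Fin k → F)) :
    Module.finrank F (matIn m U) = m * Module.finrank F U := by
  rw [LinearEquiv.finrank_eq (matInEquiv m U), Module.finrank_pi_fintype,
    Finset.sum_const, Finset.card_univ, Fintype.card_fin, smul_eq_mul]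

lemma matrix_rank_pos {k m : ℕ} {M : Matrix (Fin k) (Fin m) F} (h : M ≠ 0) : 0 < M.rank := by
  rw [Matrix.rank_eq_finrank_span_cols]
  have hj : ∃ j, Mᵀ j ≠ 0 := by
    by_contra hc
    push_neg at hc
    apply h
    ext i j
    exact congrFun (hc j) i
  obtain ⟨j, hj⟩ := hj
  rw [Nat.pos_iff_ne_zero]
  intro h0
  rw [Submodule.finrank_eq_zero] at h0
  have hmem := Submodule.subset_span (R := F) (Set.mem_range_self (f := Mᵀ) j)
  rw [show Set.range Mᵀ = Set.range M.col from rfl, h0] at hmem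
  simp only [SetLike.mem_coe, Submodule.mem_bot] at hmem
  exact hj hmem

lemma minrk_spec {k m : ℕ} {C : Submodule F (Matrix (Fin k) (Fin m) F)}
    (h : ∃ M ∈ C, M ≠ 0) : ∃ M ∈ C, M ≠ 0 ∧ M.rank = minrk C := by
  have hne : {r | ∃ M ∈ C, M ≠ 0 ∧ M.rank = r}.Nonempty := by
    obtain ⟨M, hM, h0⟩ := h
    exact ⟨M.rank, M, hM, h0, rfl⟩
  obtain ⟨M, hM, h0, hr⟩ := Nat.sInf_mem hne
  exact ⟨M, hM, h0, hr⟩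

lemma minrk_le {k m : ℕ} {C : Submodule F (Matrix (Fin k) (Fin m) F)}
    {M : Matrix (Fin k) (Fin m) F} (hM : M ∈ C) (h0 : M ≠ 0) : minrk C ≤ M.rank :=
  Nat.sInf_le ⟨M, hM, h0, rfl⟩

end Aux
section Aux2

open Module Submodule

lemma exists_submodule_finrank (k u : ℕ) (h : u ≤ k) :
    ∃ U : Submodule F (Fin k → F), Module.finrank F ↥U = u := by
  classical
  let v : Fin u → (Fin k → F) := fun i => Pi.basisFun F (Fin k) (Fin.castLE h i)
  have hli : LinearIndependent F v :=
    (Pi.basisFun F (Fin k)).linearIndependent.comp _ (Fin.castLE_injective h)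
  exact ⟨Submodule.span F (Set.range v), by
    rw [finrank_span_eq_card hli, Fintype.card_fin]⟩

lemma exists_functional {V : Type} [AddCommGroup V] [Module F V] [FiniteDimensional F V]
    (p : Submodule F V) (hp : Module.finrank F ↥p < Module.finrank F V) :
    ∃ φ : V →ₗ[F] F, φ ≠ 0 ∧ ∀ x ∈ p, φ x = 0 := by
  have hq : 0 < Module.finrank F (V ⧸ p) := by
    have h1 := Submodule.finrank_quotient_add_finrank p
    omega
  let bq := Module.finBasis F (V ⧸ p)
  refine ⟨(bq.coord ⟨0, hq⟩) ∘ₗ p.mkQ, ?_, ?_⟩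
  · intro h0
    obtain ⟨x, hx⟩ := Submodule.mkQ_surjective p (bq ⟨0, hq⟩)
    have hz := LinearMap.congr_fun h0 x
    rw [LinearMap.comp_apply, hx] at hz
    simp [Basis.coord_apply] at hz
  · intro x hx
    have : p.mkQ x = 0 := (Submodule.Quotient.mk_eq_zero _).2 hx
    simp [this]

lemma singleton_bound {k m : ℕ} (W : Submodule F (Fin k → F))
    (D : Submodule F (Matrix (Fin k) (Fin m) F)) (hDW : D ≤ matIn m W)
    (d : ℕ) (hd : 1 ≤ d) (hmin : ∀ M ∈ D, M ≠ 0 → d ≤ M.rank) :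
    Module.finrank F ↥D ≤ m * (Module.finrank F ↥W + 1 - d) := by
  classical
  set w := Module.finrank F ↥W with hw
  set t := w + 1 - d with ht
  let b : Basis (Fin w) F ↥W := Module.finBasis F ↥W
  let emb : Fin t → Fin w := fun i => ⟨(i : ℕ) + (d - 1), by have := i.2; omega⟩
  let P : (Fin m → ↥W) →ₗ[F] Matrix (Fin t) (Fin m) F :=
    { toFun := fun f => Matrix.of fun i j => b.repr (f j) (emb i)
      map_add' := by
        intro f g
        ext i j
        simp [Matrix.add_apply]
      map_smul' := by
        intro c f
        ext i j
        simp [Matrix.smul_apply] }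
  let Φ : ↥D →ₗ[F] Matrix (Fin t) (Fin m) F :=
    P ∘ₗ (matInEquiv m W).toLinearMap ∘ₗ Submodule.inclusion hDW
  have hinj : Function.Injective Φ := by
    rw [← LinearMap.ker_eq_bot, LinearMap.ker_eq_bot']
    intro M hM0
    by_contra hne
    have hMne : (M : Matrix (Fin k) (Fin m) F) ≠ 0 := by
      simpa [Submodule.coe_eq_zero] using hne
    have hdle : d ≤ (M : Matrix (Fin k) (Fin m) F).rank := hmin _ M.2 hMne
    set S : Set (Fin w) := {i | (i : ℕ) < d - 1} with hS
    have hcols : ∀ j, (M : Matrix (Fin k) (Fin m) F)ᵀ j ∈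
        Submodule.map W.subtype (Submodule.span F (b '' S)) := by
      intro j
      refine ⟨⟨(M : Matrix (Fin k) (Fin m) F)ᵀ j, hDW M.2 j⟩, ?_, rfl⟩
      simp only [SetLike.mem_coe]
      rw [Basis.mem_span_image]
      intro i hi
      simp only [Finset.coe_sort_coe, Finset.mem_coe] at hi
      rw [Set.mem_setOf_eq]
      by_contra hiS
      have hge : d - 1 ≤ (i : ℕ) := by omega
      have hlt : (i : ℕ) - (d - 1) < t := by have := i.2; omega
      have hz := congrFun (congrFun hM0 ⟨(i : ℕ) - (d - 1), hlt⟩) j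
      have hemb : emb ⟨(i : ℕ) - (d - 1), hlt⟩ = i := by
        apply Fin.ext
        simp [emb]
        omega
      rw [show ((0 : Matrix (Fin t) (Fin m) F) ⟨(i : ℕ) - (d - 1), hlt⟩ j) = 0 from rfl] at hz
      have : b.repr ⟨(M : Matrix (Fin k) (Fin m) F)ᵀ j, hDW M.2 j⟩ i = 0 := by
        rw [← hemb]
        exact hz
      exact (Finsupp.mem_support_iff.mp hi) this
    have hrank : (M : Matrix (Fin k) (Fin m) F).rank ≤ d - 1 := by
      refine le_trans (rank_le_of_cols_mem _ _ hcols) ?_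
      rw [Submodule.finrank_map_subtype_eq]
      have hfin : (b '' S).Finite := (S.toFinite.image b)
      have := hfin.fintype
      refine le_trans (finrank_span_le_card (b '' S)) ?_
      refine le_trans (Set.toFinset_image b S ▸ Finset.card_image_le) ?_
      refine le_trans (Finset.card_le_card_of_injOn (t := Finset.range (d - 1)) (fun i => (i : ℕ))
        (fun x hx => by
          simp only [Set.mem_toFinset, hS, Set.mem_setOf_eq] at hx
          simpa [Finset.mem_range] using hx)
        (fun x _ y _ hxy => Fin.ext hxy)) ?_
      simp
    omega
  have hle := LinearMap.finrank_le_finrank_of_injective hinj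
  rw [Module.finrank_matrix, Fintype.card_fin, Fintype.card_fin, Module.finrank_self,
    mul_one] at hle
  rw [mul_comm]
  exact hle
section Main

open Module Submodule

lemma arith_helper (a b c : ℕ) (ha : 2 ≤ a) (hb : 1 ≤ b) (hc : c ≤ a) :
    1 + (c - 1) * (b - 1) < b * a := by
  obtain ⟨a', rfl⟩ : ∃ a', a = a' + 2 := ⟨a - 2, by omega⟩
  obtain ⟨b', rfl⟩ : ∃ b', b = b' + 1 := ⟨b - 1, by omega⟩
  have h1 : (c - 1) * ((b' + 1) - 1) ≤ (a' + 1) * b' := Nat.mul_le_mul (by omega) (by omega)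
  nlinarith

lemma main_exists [Fintype F] {k m : ℕ} (hkm : k ≤ m)
    (C : Submodule F (Matrix (Fin k) (Fin m) F))
    (hCnz : ∃ M ∈ C, M ≠ 0)
    (hdim : Module.finrank F ↥C = m * (k - minrk C + 1))
    (u : ℕ) (hu1 : minrk C ≤ u) (hu2 : u ≤ k) :
    ∃ M ∈ C, M.rank = u := by
  classical
  set q := Fintype.card F with hqdef
  have hq2 : 2 ≤ q := Fintype.one_lt_card
  set d := minrk C with hd
  obtain ⟨M0, hM0C, hM0ne, hM0r⟩ := minrk_spec hCnz
  have hd1 : 1 ≤ d := by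
    have := matrix_rank_pos hM0ne
    omega
  have hdk : d ≤ k := by
    have h1 := M0.rank_le_card_height
    rw [Fintype.card_fin] at h1
    omega
  obtain ⟨U, hU⟩ := exists_submodule_finrank (F := F) k u hu2
  by_contra hno
  push_neg at hno
  -- every matrix with columns in U has rank < u  (if in C and nonzero), and rank ≤ u always
  set T := C ⊓ matIn m U with hT
  -- dimension bound for T
  have hTfr : m * (u + 1 - d) ≤ Module.finrank F ↥T := by
    have h1 := Submodule.finrank_sup_add_finrank_inf_eq C (matIn m U)
    have h2 : Module.finrank F ↥(C ⊔ matIn m U) ≤ k * m := by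
      have h3 := Submodule.finrank_le (C ⊔ matIn m U)
      rwa [Module.finrank_matrix, Fintype.card_fin, Fintype.card_fin, Module.finrank_self,
        mul_one] at h3
    rw [finrank_matIn, hU, hdim] at h1
    have e : m * (u + 1 - d) + k * m = m * (k - d + 1) + m * u := by
      rw [mul_comm k m, ← Nat.mul_add, ← Nat.mul_add]
      congr 1
      omega
    linarith [h1, h2]
  have hcardT : q ^ (m * (u + 1 - d)) ≤ Fintype.card ↥T := by
    rw [card_eq_pow_finrank (K := F) (V := ↥T)]
    exact Nat.pow_le_pow_right (by omega) hTfr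
  -- each bad matrix gives a functional
  have key : ∀ M : Matrix (Fin k) (Fin m) F, M ∈ C → M ∈ matIn m U → M ≠ 0 →
      ∃ φ : Module.Dual F ↥U, φ ≠ 0 ∧ ∀ j, Mᵀ j ∈ Submodule.map U.subtype (LinearMap.ker φ) := by
    intro M hMC hMU hMne
    have hVle : Submodule.span F (Set.range Mᵀ) ≤ U :=
      Submodule.span_le.2 (by rintro _ ⟨j, rfl⟩; exact hMU j)
    set V' : Submodule F ↥U := (Submodule.span F (Set.range Mᵀ)).comap U.subtype with hV'
    have hV'fr : Module.finrank F ↥V' < Module.finrank F ↥U := by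
      have h1 : Submodule.map U.subtype V' = Submodule.span F (Set.range Mᵀ) := by
        rw [hV', Submodule.map_comap_subtype, inf_eq_right.2 hVle]
      have h2 : Module.finrank F ↥V' = M.rank := by
        rw [← Submodule.finrank_map_subtype_eq U V', h1, Matrix.rank_eq_finrank_span_cols]
        rfl
      have h3 : M.rank ≤ u := by
        have := rank_le_of_cols_mem U M hMU
        omega
      have h4 : M.rank ≠ u := hno M hMC
      rw [h2, hU]
      omega
    obtain ⟨φ, hφ0, hφv⟩ := exists_functional V' hV'fr
    refine ⟨φ, hφ0, fun j => ⟨⟨Mᵀ j, hMU j⟩, ?_, rfl⟩⟩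
    rw [SetLike.mem_coe, LinearMap.mem_ker]
    exact hφv _ (by
      rw [hV', Submodule.mem_comap]
      exact Submodule.subset_span (Set.mem_range_self j))
  -- finiteness of the dual space
  letI : Finite (Module.Dual F ↥U) :=
    Finite.of_injective _ (DFunLike.coe_injective (F := Module.Dual F ↥U))
  letI hDualFin : Fintype (Module.Dual F ↥U) := Fintype.ofFinite _
  -- the bad sets
  set Bfin : Module.Dual F ↥U → Finset (Matrix (Fin k) (Fin m) F) :=
    fun φ => Finset.univ.filter
      (fun M => M ∈ C ⊓ matIn m (Submodule.map U.subtype (LinearMap.ker φ)) ∧ M ≠ 0) with hBfin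
  have hBcard : ∀ φ : Module.Dual F ↥U, φ ≠ 0 → (Bfin φ).card ≤ q ^ (m * (u - d)) - 1 := by
    intro φ hφ
    set W := Submodule.map U.subtype (LinearMap.ker φ) with hWdef
    have hWfr : Module.finrank F ↥W ≤ u - 1 := by
      rw [hWdef, Submodule.finrank_map_subtype_eq]
      have h1 := LinearMap.finrank_range_add_finrank_ker φ
      have h2 : 1 ≤ Module.finrank F ↥(LinearMap.range φ) := by
        rw [Nat.one_le_iff_ne_zero]
        intro h0
        rw [Submodule.finrank_eq_zero, LinearMap.range_eq_bot] at h0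
        exact hφ h0
      rw [hU] at h1
      omega
    set S := C ⊓ matIn m W with hSdef
    have hSfr : Module.finrank F ↥S ≤ m * (u - d) := by
      have h1 := singleton_bound W S inf_le_right d hd1
        (fun M hM hMne => minrk_le (Submodule.mem_inf.mp hM).1 hMne)
      refine le_trans h1 (Nat.mul_le_mul_left _ ?_)
      omega
    have hScard : Fintype.card ↥S ≤ q ^ (m * (u - d)) := by
      rw [card_eq_pow_finrank (K := F) (V := ↥S)]
      exact Nat.pow_le_pow_right (by omega) hSfr
    have h0 : (0 : Matrix (Fin k) (Fin m) F) ∉ Bfin φ := by simp [hBfin]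
    have hsub : insert 0 (Bfin φ) ⊆ Finset.univ.filter (· ∈ S) := by
      intro M hM
      rcases Finset.mem_insert.mp hM with rfl | hM
      · simp [Submodule.zero_mem]
      · simp only [hBfin, Finset.mem_filter, Finset.mem_univ, true_and] at hM
        simp only [Finset.mem_filter, Finset.mem_univ, true_and]
        exact hM.1
    have hcard := Finset.card_le_card hsub
    rw [Finset.card_insert_of_notMem h0] at hcard
    have hfc : (Finset.univ.filter (· ∈ S)).card = Fintype.card ↥S :=
      (Fintype.card_subtype _).symm
    omega
  -- the union bound
  set Dfin : Finset (Module.Dual F ↥U) := Finset.univ.erase 0 with hDfin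
  have hDcard : Dfin.card = q ^ u - 1 := by
    rw [hDfin, Finset.card_erase_of_mem (Finset.mem_univ _), Finset.card_univ]
    congr 1
    rw [card_eq_pow_finrank (K := F) (V := Module.Dual F ↥U), Subspace.dual_finrank_eq, hU]
  have hTsub : Finset.univ.filter (· ∈ T) ⊆ insert 0 (Dfin.biUnion Bfin) := by
    intro M hM
    simp only [Finset.mem_filter, Finset.mem_univ, true_and] at hM
    rcases eq_or_ne M 0 with rfl | hne
    · exact Finset.mem_insert_self _ _
    · obtain ⟨hMC, hMU⟩ := Submodule.mem_inf.mp hM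
      obtain ⟨φ, hφ0, hφ⟩ := key M hMC hMU hne
      refine Finset.mem_insert_of_mem (Finset.mem_biUnion.2 ⟨φ, ?_, ?_⟩)
      · simp [hDfin, hφ0]
      · simp only [hBfin, Finset.mem_filter, Finset.mem_univ, true_and]
        exact ⟨Submodule.mem_inf.2 ⟨hMC, hφ⟩, hne⟩
  have hcount : Fintype.card ↥T ≤ 1 + (q ^ u - 1) * (q ^ (m * (u - d)) - 1) := by
    have h1 := Finset.card_le_card hTsub
    have h2 : (Finset.univ.filter (· ∈ T)).card = Fintype.card ↥T :=
      (Fintype.card_subtype _).symm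
    have h3 : (Dfin.biUnion Bfin).card ≤ ∑ φ ∈ Dfin, (Bfin φ).card :=
      Finset.card_biUnion_le
    have h4 : ∑ φ ∈ Dfin, (Bfin φ).card ≤ Dfin.card * (q ^ (m * (u - d)) - 1) := by
      refine Finset.sum_le_card_nsmul _ _ _ (fun φ hφ => ?_)
      exact hBcard φ (by simpa [hDfin] using hφ)
    have h5 := Finset.card_insert_le (0 : Matrix (Fin k) (Fin m) F) (Dfin.biUnion Bfin)
    rw [hDcard] at h4
    omega
  -- final contradiction
  have hfin : q ^ (m * (u + 1 - d)) ≤ 1 + (q ^ u - 1) * (q ^ (m * (u - d)) - 1) :=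
    le_trans hcardT hcount
  have hexp : m * (u + 1 - d) = m * (u - d) + m := by
    rw [show u + 1 - d = (u - d) + 1 from by omega, Nat.mul_add, Nat.mul_one]
  rw [hexp, pow_add] at hfin
  have hmu : q ^ u ≤ q ^ m := Nat.pow_le_pow_right (by omega) (le_trans hu2 hkm)
  have hm1 : 1 ≤ m := le_trans (le_trans hd1 (le_trans hu1 hu2)) hkm
  have ha : 2 ≤ q ^ m := le_trans hq2 (Nat.le_self_pow (by omega) q)
  have hb : 1 ≤ q ^ (m * (u - d)) := Nat.one_le_pow _ _ (by omega)
  exact absurd hfin (Nat.not_le.mpr (by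
    have := arith_helper (q ^ m) (q ^ (m * (u - d))) (q ^ u) ha hb hmu
    linarith))

end Main
section Final

open Module Submodule

lemma minrk_map_transpose {k m : ℕ} (C : Submodule F (Matrix (Fin k) (Fin m) F)) :
    minrk (C.map (Matrix.transposeLinearEquiv (Fin k) (Fin m) F F).toLinearMap) = minrk C := by
  unfold minrk
  congr 1
  ext r
  simp only [Set.mem_setOf_eq]
  constructor
  · rintro ⟨N, ⟨M, hM, rfl⟩, hne, hr⟩
    simp only [LinearEquiv.coe_coe, Matrix.transposeLinearEquiv_apply, Matrix.transposeAddEquiv_apply] at hne hr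
    refine ⟨M, hM, ?_, ?_⟩
    · intro h0
      exact hne (show Mᵀ = 0 by simp [h0])
    · rw [← hr]
      exact (Matrix.rank_transpose M).symm
  · rintro ⟨M, hM, hne, hr⟩
    refine ⟨Mᵀ, ⟨M, hM, by simp⟩, ?_, ?_⟩
    · intro h0
      apply hne
      simpa using congrArg Matrix.transpose h0
    · rw [Matrix.rank_transpose]
      exact hr

/-- A non-zero MRD code with minimum rank `d` has non-zero rank distribution in every
rank `d + l` with `0 ≤ l ≤ min {k, m} - d`. -/
theorem stmt_12 (F : Type) [Field F] [Fintype F] (k m : ℕ) (hk : 0 < k) (hm : 0 < m)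
    (C : Submodule F (Matrix (Fin k) (Fin m) F)) (hC : IsMRD C) (hC0 : C ≠ ⊥)
    (d : ℕ) (hd : minrk C = d) (l : ℕ) (hl : l ≤ min k m - d) :
    0 < rankDist C (d + l) := by
  classical
  have hCnz : ∃ M ∈ C, M ≠ 0 := by
    obtain ⟨M, hM, hne⟩ := Submodule.exists_mem_ne_zero_of_ne_bot hC0
    exact ⟨M, hM, hne⟩
  have hdim := hC.resolve_left hC0
  obtain ⟨M0, hM0C, hM0ne, hM0r⟩ := minrk_spec hCnz
  have hdk : d ≤ k := by
    have h1 := M0.rank_le_card_height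
    rw [Fintype.card_fin] at h1
    omega
  have hdm : d ≤ m := by
    have h1 := M0.rank_le_card_width
    rw [Fintype.card_fin] at h1
    omega
  have hex : ∃ M ∈ C, M.rank = d + l := by
    rcases le_total k m with hkm | hmk
    · have hdim' : Module.finrank F ↥C = m * (k - minrk C + 1) := by
        rw [hdim, max_eq_right hkm, min_eq_left hkm]
      refine main_exists hkm C hCnz hdim' (d + l) (by omega) ?_
      rw [min_eq_left hkm] at hl
      omega
    · set τ := Matrix.transposeLinearEquiv (Fin k) (Fin m) F F with hτ
      set C' := C.map τ.toLinearMap with hC'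
      have h1 : minrk C' = d := by rw [hC', hτ, minrk_map_transpose, hd]
      have hCnz' : ∃ N ∈ C', N ≠ 0 := by
        obtain ⟨M, hM, hne⟩ := hCnz
        refine ⟨Mᵀ, ⟨M, hM, rfl⟩, ?_⟩
        intro h0
        apply hne
        simpa using congrArg Matrix.transpose h0
      have hdim' : Module.finrank F ↥C' = k * (m - minrk C' + 1) := by
        rw [h1, hC', LinearEquiv.finrank_map_eq, hdim, max_eq_left hmk, min_eq_right hmk, hd]
      obtain ⟨N, hN, hNr⟩ := main_exists hmk C' hCnz' hdim' (d + l) (by omega)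
        (by rw [min_eq_right hmk] at hl; omega)
      obtain ⟨M, hM, rfl⟩ := hN
      refine ⟨M, hM, ?_⟩
      rw [← Matrix.rank_transpose M]
      rw [hτ] at hNr
      simpa using hNr
  obtain ⟨M, hM, hMr⟩ := hex
  haveI : Nonempty {M : Matrix (Fin k) (Fin m) F // M ∈ C ∧ M.rank = d + l} := ⟨⟨M, hM, hMr⟩⟩
  exact Nat.card_pos
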